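/- In the first-order language with one binary relation symbol E and two unary predicate symbols p and q, there is no sentence φ such that for every finite structure G: G satisfies φ if and only if every element u of G has at least as many E-successors satisfying p as E-successors satisfying q (i.e., |{v : E(u,v) and p(v)}| ≥ |{v : E(u,v) and q(v)}| for all u). -/

import Mathlib

open scoped Classical

open FirstOrder FirstOrder.Language

/-- The first-order language with one binary relation symbol `E` and two unary
predicate symbols `p` and `q`. -/
def sigLang : FirstOrder.Language where
  Functions := fun _ => Empty
  Relations := fun n =>
    match n with
    | 1 => Fin 2
    | 2 => Unit
    | _ => Empty

/-- The unary predicate symbol `p`. -/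
def pSym : sigLang.Relations 1 := (0 : Fin 2)

/-- The unary predicate symbol `q`. -/
def qSym : sigLang.Relations 1 := (1 : Fin 2)

/-- The binary relation symbol `E`. -/
def eSym : sigLang.Relations 2 := Unit.unit


/-- The star structure with hub `none`, `a` p-vertices and `b` q-vertices. -/
abbrev Md (a b : ℕ) : Type := Option (Fin a ⊕ Fin b)

/-- The class of an element: `none` = hub, `some true` = p, `some false` = q. -/
def ty {a b : ℕ} : Md a b → Option Bool
  | none => none
  | some (Sum.inl _) => some true
  | some (Sum.inr _) => some false

instance (a b : ℕ) : sigLang.Structure (Md a b) where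
  funMap := fun {n} f => f.elim
  RelMap := fun {n} R x =>
    match n, R with
    | 1, R => if R = (0 : Fin 2) then ty (x 0) = some true else ty (x 0) = some false
    | 2, _ => x 0 = none ∧ x 1 ≠ none
    | 0, R => R.elim
    | (_+3), R => R.elim

lemma relMap_p {a b : ℕ} (x : Fin 1 → Md a b) :
    Structure.RelMap pSym x ↔ ty (x 0) = some true := by
  show (if pSym = (0 : Fin 2) then ty (x 0) = some true else ty (x 0) = some false) ↔ ty (x 0) = some true
  split
  · exact Iff.rfl
  · exact absurd rfl ‹_›

lemma relMap_q {a b : ℕ} (x : Fin 1 → Md a b) :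
    Structure.RelMap qSym x ↔ ty (x 0) = some false := by
  show (if qSym = (0 : Fin 2) then ty (x 0) = some true else ty (x 0) = some false) ↔ ty (x 0) = some false
  split
  · exact absurd (‹_› : (1 : Fin 2) = 0) (by decide)
  · exact Iff.rfl

lemma relMap_e {a b : ℕ} (x : Fin 2 → Md a b) :
    Structure.RelMap eSym x ↔ x 0 = none ∧ x 1 ≠ none := Iff.rfl

lemma ty_eq_none {a b : ℕ} (v : Md a b) : ty v = none ↔ v = none := by
  rcases v with _ | (i | i) <;> simp [ty]

lemma ty_eq_true {a b : ℕ} (v : Md a b) : ty v = some true ↔ ∃ i, v = some (Sum.inl i) := by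
  rcases v with _ | (i | i) <;> simp [ty] <;> first | exact ⟨i, rfl⟩ | rintro j ⟨⟩

lemma ty_eq_false {a b : ℕ} (v : Md a b) : ty v = some false ↔ ∃ i, v = some (Sum.inr i) := by
  rcases v with _ | (i | i) <;> simp [ty] <;> first | exact ⟨i, rfl⟩ | rintro j ⟨⟩

lemma term_eq_var {m : ℕ} (u : sigLang.Term (Empty ⊕ Fin m)) :
    ∃ i, u = Term.var (Sum.inr i) := by
  cases u with
  | var v =>
    rcases v with e | i
    · exact e.elim
    · exact ⟨i, rfl⟩
  | func f ts => exact f.elim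

/-- Quantifier depth. -/
def qd : ∀ {m : ℕ}, sigLang.BoundedFormula Empty m → ℕ
  | _, .falsum => 0
  | _, .equal _ _ => 0
  | _, .rel _ _ => 0
  | _, .imp f g => max (qd f) (qd g)
  | _, .all f => qd f + 1

lemma fresh {m n : ℕ} (h : m < n) {β : Type*} (g : Fin n → β)
    (hg : Function.Injective g) (t : Fin m → β) : ∃ k, ∀ i, t i ≠ g k := by
  by_contra hc
  push_neg at hc
  choose f hf using hc
  have hfi : Function.Injective f := fun k k' hkk => hg (by rw [← hf k, ← hf k', hkk])
  have := Fintype.card_le_of_injective f hfi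
  simp at this
  omega

/-- Extension step of the Ehrenfeucht–Fraïssé argument. -/
lemma extend {a b a' b' m : ℕ} (s : Fin m → Md a b) (t : Fin m → Md a' b')
    (ha' : m < a') (hb' : m < b')
    (hty : ∀ i, ty (s i) = ty (t i))
    (heq : ∀ i j, s i = s j ↔ t i = t j) (x : Md a b) :
    ∃ y : Md a' b', ty x = ty y ∧ ∀ i, (s i = x ↔ t i = y) := by
  by_cases hx : ∃ i, s i = x
  · obtain ⟨i, hi⟩ := hx
    exact ⟨t i, by rw [← hi, hty i], fun j => by rw [← hi, heq j i]⟩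
  · push_neg at hx
    rcases hv : x with _ | (k | k)
    · refine ⟨none, rfl, fun i => ?_⟩
      rw [hv] at hx
      constructor
      · exact fun h => absurd h (hx i)
      · intro h
        exact absurd ((ty_eq_none (s i)).mp (by rw [hty i, h]; rfl)) (hx i)
    · obtain ⟨k', hk'⟩ := fresh ha' (fun k' : Fin a' => (some (Sum.inl k') : Md a' b'))
        (fun u v huv => by simpa using huv) t
      rw [hv] at hx
      exact ⟨some (Sum.inl k'), rfl, fun i =>
        iff_of_false (hx i) (hk' i)⟩
    · obtain ⟨k', hk'⟩ := fresh hb' (fun k' : Fin b' => (some (Sum.inr k') : Md a' b'))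
        (fun u v huv => by simpa using huv) t
      rw [hv] at hx
      exact ⟨some (Sum.inr k'), rfl, fun i =>
        iff_of_false (hx i) (hk' i)⟩

lemma relMap_congr : ∀ {l : ℕ} (R : sigLang.Relations l) {a b a' b' : ℕ}
    (x : Fin l → Md a b) (y : Fin l → Md a' b'),
    (∀ i, ty (x i) = ty (y i)) → (Structure.RelMap R x ↔ Structure.RelMap R y)
  | 0, R, _, _, _, _, _, _, _ => R.elim
  | 1, R, _, _, _, _, x, y, h => by
      show (if R = (0 : Fin 2) then ty (x 0) = some true else ty (x 0) = some false) ↔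
        (if R = (0 : Fin 2) then ty (y 0) = some true else ty (y 0) = some false)
      rw [h 0]
  | 2, R, _, _, _, _, x, y, h => by
      have h0 : x 0 = none ↔ y 0 = none := by rw [← ty_eq_none, h 0, ty_eq_none]
      have h1 : x 1 = none ↔ y 1 = none := by rw [← ty_eq_none, h 1, ty_eq_none]
      show (x 0 = none ∧ x 1 ≠ none) ↔ (y 0 = none ∧ y 1 ≠ none)
      rw [ne_eq, h0, h1]
  | (_+3), R, _, _, _, _, _, _, _ => R.elim

lemma snoc_match {a b a' b' m : ℕ} {s : Fin m → Md a b} {t : Fin m → Md a' b'}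
    (hty : ∀ i, ty (s i) = ty (t i)) (heq : ∀ i j, s i = s j ↔ t i = t j)
    {x : Md a b} {y : Md a' b'} (h1 : ty x = ty y) (h2 : ∀ i, s i = x ↔ t i = y) :
    (∀ i : Fin (m + 1), ty ((Fin.snoc s x : Fin (m + 1) → Md a b) i) =
        ty ((Fin.snoc t y : Fin (m + 1) → Md a' b') i)) ∧
    (∀ i j : Fin (m + 1), (Fin.snoc s x : Fin (m + 1) → Md a b) i =
        (Fin.snoc s x : Fin (m + 1) → Md a b) j ↔
      (Fin.snoc t y : Fin (m + 1) → Md a' b') i =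
        (Fin.snoc t y : Fin (m + 1) → Md a' b') j) := by
  constructor
  · intro i
    refine Fin.lastCases ?_ ?_ i
    · simpa using h1
    · intro j; simpa using hty j
  · intro i j
    refine Fin.lastCases ?_ (fun i' => ?_) i
    · refine Fin.lastCases ?_ (fun j' => ?_) j
      · simp
      · simp only [Fin.snoc_last, Fin.snoc_castSucc]
        rw [eq_comm, @eq_comm _ y]
        exact h2 j'
    · refine Fin.lastCases ?_ (fun j' => ?_) j
      · simpa using h2 i'
      · simpa using heq i' j'

lemma main_lemma {m : ℕ} (φ : sigLang.BoundedFormula Empty m) :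
    ∀ {a b a' b' : ℕ} (s : Fin m → Md a b) (t : Fin m → Md a' b'),
    m + qd φ ≤ a → m + qd φ ≤ b → m + qd φ ≤ a' → m + qd φ ≤ b' →
    (∀ i, ty (s i) = ty (t i)) → (∀ i j, s i = s j ↔ t i = t j) →
    (φ.Realize Empty.elim s ↔ φ.Realize Empty.elim t) := by
  induction φ with
  | falsum => exact fun _ _ _ _ _ _ _ _ => Iff.rfl
  | equal t₁ t₂ =>
    intro a b a' b' s t ha hb ha' hb' hty heq
    obtain ⟨i, rfl⟩ := term_eq_var t₁
    obtain ⟨j, rfl⟩ := term_eq_var t₂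
    show s i = s j ↔ t i = t j
    exact heq i j
  | rel R ts =>
    intro a b a' b' s t ha hb ha' hb' hty heq
    show Structure.RelMap R (fun i => (ts i).realize (Sum.elim Empty.elim s)) ↔
      Structure.RelMap R (fun i => (ts i).realize (Sum.elim Empty.elim t))
    refine relMap_congr R _ _ (fun i => ?_)
    obtain ⟨j, hj⟩ := term_eq_var (ts i)
    simp only [hj, Term.realize_var, Sum.elim_inr]
    exact hty j
  | imp f g ihf ihg =>
    intro a b a' b' s t ha hb ha' hb' hty heq
    simp only [qd] at ha hb ha' hb'
    rw [BoundedFormula.realize_imp, BoundedFormula.realize_imp]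
    exact imp_congr
      (ihf s t (by omega) (by omega) (by omega) (by omega) hty heq)
      (ihg s t (by omega) (by omega) (by omega) (by omega) hty heq)
  | all f ih =>
    intro a b a' b' s t ha hb ha' hb' hty heq
    simp only [qd] at ha hb ha' hb'
    rw [BoundedFormula.realize_all, BoundedFormula.realize_all]
    constructor
    · intro h y
      obtain ⟨x, h1, h2⟩ := extend t s (by omega) (by omega)
        (fun i => (hty i).symm) (fun i j => (heq i j).symm) y
      obtain ⟨hty', heq'⟩ := snoc_match hty heq h1.symm (fun i => (h2 i).symm)
      exact (ih (Fin.snoc s x) (Fin.snoc t y)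
        (by omega) (by omega) (by omega) (by omega) hty' heq').mp (h x)
    · intro h x
      obtain ⟨y, h1, h2⟩ := extend s t (by omega) (by omega) hty heq x
      obtain ⟨hty', heq'⟩ := snoc_match hty heq h1 h2
      exact (ih (Fin.snoc s x) (Fin.snoc t y)
        (by omega) (by omega) (by omega) (by omega) hty' heq').mpr (h y)

lemma card_p (a b : ℕ) (u : Md a b) :
    Nat.card {v : Md a b // Structure.RelMap eSym ![u, v] ∧ Structure.RelMap pSym ![v]} =
      if u = none then a else 0 := by
  split_ifs with hu
  · subst hu
    have hg : Function.Bijective (fun i : Fin a =>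
        (⟨(some (Sum.inl i) : Md a b), by
          refine ⟨(relMap_e _).mpr ⟨?_, ?_⟩, (relMap_p _).mpr ?_⟩ <;> simp [ty]⟩ :
          {v : Md a b // Structure.RelMap eSym ![none, v] ∧ Structure.RelMap pSym ![v]})) := by
      constructor
      · intro i j hij
        simpa using congrArg Subtype.val hij
      · rintro ⟨v, he, hp⟩
        have : ty v = some true := by simpa using (relMap_p _).mp hp
        obtain ⟨i, rfl⟩ := (ty_eq_true v).mp this
        exact ⟨i, rfl⟩
    rw [Nat.card_congr (Equiv.ofBijective _ hg).symm]
    simp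
  · have : IsEmpty {v : Md a b // Structure.RelMap eSym ![u, v] ∧ Structure.RelMap pSym ![v]} := by
      refine ⟨fun ⟨v, he, _⟩ => hu ?_⟩
      simpa using ((relMap_e _).mp he).1
    simp [Nat.card_of_isEmpty]

lemma card_q (a b : ℕ) (u : Md a b) :
    Nat.card {v : Md a b // Structure.RelMap eSym ![u, v] ∧ Structure.RelMap qSym ![v]} =
      if u = none then b else 0 := by
  split_ifs with hu
  · subst hu
    have hg : Function.Bijective (fun i : Fin b =>
        (⟨(some (Sum.inr i) : Md a b), by
          refine ⟨(relMap_e _).mpr ⟨?_, ?_⟩, (relMap_q _).mpr ?_⟩ <;> simp [ty]⟩ :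
          {v : Md a b // Structure.RelMap eSym ![none, v] ∧ Structure.RelMap qSym ![v]})) := by
      constructor
      · intro i j hij
        simpa using congrArg Subtype.val hij
      · rintro ⟨v, he, hp⟩
        have : ty v = some false := by simpa using (relMap_q _).mp hp
        obtain ⟨i, rfl⟩ := (ty_eq_false v).mp this
        exact ⟨i, rfl⟩
    rw [Nat.card_congr (Equiv.ofBijective _ hg).symm]
    simp
  · have : IsEmpty {v : Md a b // Structure.RelMap eSym ![u, v] ∧ Structure.RelMap qSym ![v]} := by
      refine ⟨fun ⟨v, he, _⟩ => hu ?_⟩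
      simpa using ((relMap_e _).mp he).1
    simp [Nat.card_of_isEmpty]

/-- In the first-order language with one binary relation `E` and unary predicates
`p`, `q`, no sentence expresses, over finite structures, that every element has at
least as many `E`-successors satisfying `p` as `E`-successors satisfying `q`. -/
theorem no_FO_sentence_for_count_comparison :
    ¬ ∃ φ : sigLang.Sentence,
      ∀ (M : Type) [Fintype M] [sigLang.Structure M],
        (M ⊨ φ ↔
          ∀ u : M,
            Nat.card {v : M // Structure.RelMap eSym ![u, v] ∧ Structure.RelMap pSym ![v]} ≥
            Nat.card {v : M // Structure.RelMap eSym ![u, v] ∧ Structure.RelMap qSym ![v]}) := by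
  rintro ⟨φ, hφ⟩
  set n := qd φ + 1 with hn
  have key : (Md n n ⊨ φ) ↔ (Md n (n + 1) ⊨ φ) := by
    have h := main_lemma φ (default : Fin 0 → Md n n) (default : Fin 0 → Md n (n + 1))
      (by omega) (by omega) (by omega) (by omega) (fun i => i.elim0) (fun i j => i.elim0)
    have eA : (Empty.elim : Empty → Md n n) = default := funext fun e => e.elim
    have eB : (Empty.elim : Empty → Md n (n + 1)) = default := funext fun e => e.elim
    rw [eA, eB] at h
    unfold Sentence.Realize Formula.Realize
    convert h using 2 <;> exact Subsingleton.elim _ _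
  have hA : Md n n ⊨ φ := by
    rw [hφ]
    intro u
    rw [card_p, card_q]
  have hB := (hφ (Md n (n + 1))).mp (key.mp hA) none
  rw [card_p, card_q] at hB
  simp at hB
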